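/- Let G be a simple graph, {a,b} an edge of G, and G' = G − {a,b}. Then in the augmented graph G* (which is connected and in which the edge {a,b} lies on the triangle a, b, u*), the effective resistance satisfies r* = M*[a,a] − 2·M*[a,b] + M*[b,b] < 1 for any Moore–Penrose pseudoinverse M* of L_{G*}; in particular the denominator 1 − r* appearing in the Sherman–Morrison update for the augmented Laplacian pseudoinverse is nonzero for every edge of G. -/

import Mathlib

open Matrix BigOperators

/-- `M` is a Moore–Penrose pseudoinverse of `L`. -/
def IsMoorePenrose {n : Type*} [Fintype n] (L M : Matrix n n ℝ) : Prop :=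
  L * M * L = L ∧ M * L * M = M ∧ (L * M)ᵀ = L * M ∧ (M * L)ᵀ = M * L

/-- The augmented graph `G*` of `G`: a new universal vertex `none` is joined
to every vertex of `G`. -/
def augment {V : Type*} (G : SimpleGraph V) : SimpleGraph (Option V) :=
  SimpleGraph.fromRel fun x y =>
    (∃ u v, x = some u ∧ y = some v ∧ G.Adj u v) ∨ x = none ∨ y = none

instance augmentAdjDecidable {V : Type*} [Fintype V] [DecidableEq V]
    (G : SimpleGraph V) [DecidableRel G.Adj] : DecidableRel (augment G).Adj :=
  fun x y => decidable_of_iff' _ (SimpleGraph.fromRel_adj _ x y)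

section Aux

variable {V : Type*}

lemma augment_adj_none (G : SimpleGraph V) (v : Option V) (h : v ≠ none) :
    (augment G).Adj none v := by
  rw [augment, SimpleGraph.fromRel_adj]
  exact ⟨Ne.symm h, Or.inl (Or.inr (Or.inl rfl))⟩

lemma augment_connected (G : SimpleGraph V) : (augment G).Connected := by
  rw [SimpleGraph.connected_iff]
  refine ⟨fun u v => ?_, ⟨none⟩⟩
  have key : ∀ w : Option V, (augment G).Reachable none w := by
    intro w
    rcases eq_or_ne w none with rfl | h
    · exact SimpleGraph.Reachable.refl _
    · exact (augment_adj_none G w h).reachable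
  exact (key u).symm.trans (key v)

lemma augment_adj_some (G : SimpleGraph V) {a b : V} (hab : G.Adj a b) :
    (augment G).Adj (some a) (some b) := by
  rw [augment, SimpleGraph.fromRel_adj]
  exact ⟨by simpa using hab.ne, Or.inl (Or.inl ⟨a, b, rfl, rfl, hab⟩)⟩

/-- Uniqueness of the Moore–Penrose pseudoinverse for symmetric `L`. -/
lemma mp_unique {n : Type*} [Fintype n] {L M N : Matrix n n ℝ} (hL : Lᵀ = L)
    (hM : IsMoorePenrose L M) (hN : IsMoorePenrose L N) : M = N := by
  obtain ⟨m1, m2, m3, m4⟩ := hM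
  obtain ⟨n1, n2, n3, n4⟩ := hN
  have m3' : Mᵀ * L = L * M := by
    calc Mᵀ * L = Mᵀ * Lᵀ := by rw [hL]
    _ = (L * M)ᵀ := (transpose_mul L M).symm
    _ = L * M := m3
  have n3' : Nᵀ * L = L * N := by
    calc Nᵀ * L = Nᵀ * Lᵀ := by rw [hL]
    _ = (L * N)ᵀ := (transpose_mul L N).symm
    _ = L * N := n3
  have m4' : L * Mᵀ = M * L := by
    calc L * Mᵀ = Lᵀ * Mᵀ := by rw [hL]
    _ = (M * L)ᵀ := (transpose_mul M L).symm
    _ = M * L := m4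
  have n4' : L * Nᵀ = N * L := by
    calc L * Nᵀ = Lᵀ * Nᵀ := by rw [hL]
    _ = (N * L)ᵀ := (transpose_mul N L).symm
    _ = N * L := n4
  have hn : L * Nᵀ * L = L := by
    have h := congrArg Matrix.transpose n1
    simp only [transpose_mul, hL, Matrix.mul_assoc] at h
    simpa [Matrix.mul_assoc] using h
  have e1 : L * M = L * N := by
    calc L * M = Mᵀ * L := m3'.symm
    _ = Mᵀ * (L * Nᵀ * L) := by rw [hn]
    _ = (Mᵀ * L) * (Nᵀ * L) := by simp only [Matrix.mul_assoc]
    _ = (L * M) * (L * N) := by rw [m3', n3']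
    _ = (L * M * L) * N := by simp only [Matrix.mul_assoc]
    _ = L * N := by rw [m1]
  have e2 : M * L = N * L := by
    calc M * L = L * Mᵀ := m4'.symm
    _ = (L * Nᵀ * L) * Mᵀ := by rw [hn]
    _ = (L * Nᵀ) * (L * Mᵀ) := by simp only [Matrix.mul_assoc]
    _ = (N * L) * (M * L) := by rw [n4', m4']
    _ = N * (L * M * L) := by simp only [Matrix.mul_assoc]
    _ = N * L := by rw [m1]
  calc M = M * L * M := m2.symm
  _ = (N * L) * M := by rw [show M * L = N * L from e2]
  _ = N * (L * M) := by rw [Matrix.mul_assoc]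
  _ = N * (L * N) := by rw [e1]
  _ = N * L * N := by rw [Matrix.mul_assoc]
  _ = N := n2

lemma mp_symm {n : Type*} [Fintype n] {L M : Matrix n n ℝ} (hL : Lᵀ = L)
    (hM : IsMoorePenrose L M) : Mᵀ = M := by
  obtain ⟨m1, m2, m3, m4⟩ := hM
  refine (mp_unique hL ⟨m1, m2, m3, m4⟩ ?_).symm
  have m3' : Mᵀ * L = L * M := by
    calc Mᵀ * L = Mᵀ * Lᵀ := by rw [hL]
    _ = (L * M)ᵀ := (transpose_mul L M).symm
    _ = L * M := m3
  have m4' : L * Mᵀ = M * L := by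
    calc L * Mᵀ = Lᵀ * Mᵀ := by rw [hL]
    _ = (M * L)ᵀ := (transpose_mul M L).symm
    _ = M * L := m4
  refine ⟨?_, ?_, ?_, ?_⟩
  · have h := congrArg Matrix.transpose m1
    simp only [transpose_mul, hL, Matrix.mul_assoc] at h
    simpa [Matrix.mul_assoc] using h
  · have h := congrArg Matrix.transpose m2
    simp only [transpose_mul, hL, Matrix.mul_assoc] at h
    simpa [Matrix.mul_assoc] using h
  · calc (L * Mᵀ)ᵀ = (M * L)ᵀ := by rw [m4']
    _ = M * L := m4
    _ = L * Mᵀ := m4'.symm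
  · calc (Mᵀ * L)ᵀ = (L * M)ᵀ := by rw [m3']
    _ = L * M := m3
    _ = Mᵀ * L := m3'.symm

/-- A vector orthogonal to the kernel of a real symmetric matrix lies in its range. -/
lemma exists_mulVec_eq {n : Type*} [Fintype n] [DecidableEq n] (L : Matrix n n ℝ)
    (hL : L.IsHermitian) (x : n → ℝ)
    (hx : ∀ u : n → ℝ, L *ᵥ u = 0 → u ⬝ᵥ x = 0) : ∃ z, L *ᵥ z = x := by
  classical
  set T := Matrix.toEuclideanLin L with hT
  have hsym : T.IsSymmetric := Matrix.isHermitian_iff_isSymmetric.mp hL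
  have hTapp : ∀ v : EuclideanSpace ℝ n,
      T v = (WithLp.equiv 2 (n → ℝ)).symm (L *ᵥ (WithLp.equiv 2 (n → ℝ)) v) := fun v =>
    Matrix.toEuclideanLin_apply L v
  have hker : (LinearMap.range T)ᗮ = LinearMap.ker T := by
    ext v
    rw [Submodule.mem_orthogonal, LinearMap.mem_ker]
    constructor
    · intro hv
      have h1 : ∀ u, (inner ℝ (u : EuclideanSpace ℝ n) (T v) : ℝ) = 0 := by
        intro u
        rw [← hsym u v]
        exact hv (T u) ⟨u, rfl⟩
      have h2 : (inner ℝ (T v) (T v) : ℝ) = 0 := h1 (T v)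
      exact inner_self_eq_zero.mp h2
    · intro hv u hu
      obtain ⟨w, rfl⟩ := hu
      rw [hsym w v, hv, inner_zero_right]
  have hrange : LinearMap.range T = (LinearMap.ker T)ᗮ := by
    rw [← hker, Submodule.orthogonal_orthogonal]
  set x' : EuclideanSpace ℝ n := (WithLp.equiv 2 (n → ℝ)).symm x with hx'
  have hmem : x' ∈ (LinearMap.ker T)ᗮ := by
    rw [Submodule.mem_orthogonal]
    intro u hu
    rw [LinearMap.mem_ker, hTapp] at hu
    have hu0 : L *ᵥ (WithLp.equiv 2 (n → ℝ)) u = 0 := by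
      have := congrArg (WithLp.equiv 2 (n → ℝ)) hu
      simpa using this
    have h0 : ((WithLp.equiv 2 (n → ℝ)) u) ⬝ᵥ x = 0 := hx _ hu0
    rw [PiLp.inner_apply]
    simpa [dotProduct, hx', mul_comm] using h0
  rw [← hrange] at hmem
  obtain ⟨z, hz⟩ := hmem
  refine ⟨(WithLp.equiv 2 (n → ℝ)) z, ?_⟩
  have := congrArg (WithLp.equiv 2 (n → ℝ)) (hTapp z ▸ hz)
  simpa [hx'] using this

lemma tri_bound {s p q : ℝ} (h1 : (p + q)^2 + p^2 + q^2 ≤ s) (h2 : s = p + q) :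
    s < 1 := by
  nlinarith [sq_nonneg (p - q), sq_nonneg (p + q)]

end Aux

theorem augmented_effective_resistance_lt_one {V : Type*} [Fintype V]
    [DecidableEq V] (G : SimpleGraph V) [DecidableRel G.Adj]
    (a b : V) (hab : G.Adj a b)
    (M : Matrix (Option V) (Option V) ℝ)
    (hM : IsMoorePenrose ((augment G).lapMatrix ℝ) M) :
    (augment G).Connected ∧
      M (some a) (some a) - 2 * M (some a) (some b) + M (some b) (some b) < 1 ∧
      1 - (M (some a) (some a) - 2 * M (some a) (some b) + M (some b) (some b)) ≠ 0 := by
  classical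
  set L : Matrix (Option V) (Option V) ℝ := (augment G).lapMatrix ℝ with hLdef
  have hLsym : Lᵀ = L := (augment G).isSymm_lapMatrix (R := ℝ)
  have hLher : L.IsHermitian := (SimpleGraph.posSemidef_lapMatrix ℝ (augment G)).1
  have hConn : (augment G).Connected := augment_connected G
  have hMsymm : Mᵀ = M := mp_symm hLsym hM
  obtain ⟨m1, m2, m3, m4⟩ := hM
  set x : Option V → ℝ := Pi.single (some a) 1 - Pi.single (some b) 1 with hxdef
  -- x is orthogonal to the kernel of L
  have hker : ∀ u : Option V → ℝ, L *ᵥ u = 0 → u ⬝ᵥ x = 0 := by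
    intro u hu
    have hc := ((augment G).lapMatrix_mulVec_eq_zero_iff_forall_reachable (x := u)).mp
      hu
    have hab' : u (some a) = u (some b) :=
      hc _ _ (hConn.preconnected (some a) (some b))
    simp [hxdef, dotProduct_sub, dotProduct_single, hab']
  obtain ⟨z, hz⟩ := exists_mulVec_eq L hLher x hker
  set y : Option V → ℝ := M *ᵥ x with hydef
  have hLy : L *ᵥ y = x := by
    rw [hydef, ← hz]
    calc L *ᵥ (M *ᵥ (L *ᵥ z)) = (L * M * L) *ᵥ z := by
          rw [mulVec_mulVec, mulVec_mulVec]
    _ = L *ᵥ z := by rw [m1]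
  set d : ℝ := x ⬝ᵥ y with hddef
  have hsba : M (some b) (some a) = M (some a) (some b) := by
    have := congrFun (congrFun hMsymm (some b)) (some a)
    simpa [Matrix.transpose_apply] using this.symm
  have hyapp : ∀ i, y i = M i (some a) - M i (some b) := by
    intro i
    rw [hydef, hxdef]
    simp [Matrix.mulVec_sub, Matrix.mulVec_single]
  have hd2 : d = y (some a) - y (some b) := by
    rw [hddef, hxdef]
    simp [sub_dotProduct, single_dotProduct]
  have hd1 : d = M (some a) (some a) - 2 * M (some a) (some b) + M (some b) (some b) := by
    rw [hd2, hyapp, hyapp, hsba]; ring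
  -- lower bound the quadratic form by three edges of the triangle a, b, none
  set f : Option V → Option V → ℝ :=
    fun i j => if (augment G).Adj i j then (y i - y j)^2 else 0 with hfdef
  -- quadratic form expression
  have hquad : d = (∑ i, ∑ j, f i j) / 2 := by
    have hq := (augment G).lapMatrix_toLinearMap₂' ℝ y
    rw [Matrix.toLinearMap₂'_apply'] at hq
    rw [hddef, ← hLy, dotProduct_comm, hq]
  have hf : ∀ i j, 0 ≤ f i j := by
    intro i j
    simp only [hfdef]
    split <;> [exact sq_nonneg _; exact le_refl 0]
  have hA1 : (augment G).Adj (some a) (some b) := augment_adj_some G hab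
  have hA2 : (augment G).Adj none (some a) := augment_adj_none G _ (by simp)
  have hA3 : (augment G).Adj none (some b) := augment_adj_none G _ (by simp)
  have hne : (some a : Option V) ≠ some b := by simpa using hab.ne
  have inner1 : f (some a) (some b) + f (some a) none ≤ ∑ j, f (some a) j := by
    rw [← Finset.sum_pair (show (some b : Option V) ≠ none by simp)]
    exact Finset.sum_le_sum_of_subset_of_nonneg (Finset.subset_univ _)
      (fun j _ _ => hf _ j)
  have inner2 : f (some b) (some a) + f (some b) none ≤ ∑ j, f (some b) j := by
    rw [← Finset.sum_pair (show (some a : Option V) ≠ none by simp)]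
    exact Finset.sum_le_sum_of_subset_of_nonneg (Finset.subset_univ _)
      (fun j _ _ => hf _ j)
  have inner3 : f none (some a) + f none (some b) ≤ ∑ j, f none j := by
    rw [← Finset.sum_pair hne]
    exact Finset.sum_le_sum_of_subset_of_nonneg (Finset.subset_univ _)
      (fun j _ _ => hf _ j)
  have houter : (∑ j, f (some a) j) + ((∑ j, f (some b) j) + (∑ j, f none j))
      ≤ ∑ i, ∑ j, f i j := by
    have h1 : ∑ i ∈ ({some a, some b, none} : Finset (Option V)), (∑ j, f i j)
        = (∑ j, f (some a) j) + ((∑ j, f (some b) j) + (∑ j, f none j)) := by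
      rw [Finset.sum_insert (show (some a : Option V) ∉ ({some b, none} : Finset (Option V)) by
        simp [hab.ne]), Finset.sum_pair (show (some b : Option V) ≠ none by simp)]
    rw [← h1]
    exact Finset.sum_le_sum_of_subset_of_nonneg (Finset.subset_univ _)
      (fun i _ _ => Finset.sum_nonneg fun j _ => hf i j)
  have hv1 : f (some a) (some b) = (y (some a) - y (some b))^2 := if_pos hA1
  have hv2 : f (some b) (some a) = (y (some a) - y (some b))^2 := by
    simp only [hfdef]; rw [if_pos hA1.symm]; ring
  have hv3 : f (some a) none = (y (some a) - y none)^2 := by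
    simp only [hfdef]; rw [if_pos hA2.symm]
  have hv4 : f none (some a) = (y (some a) - y none)^2 := by
    simp only [hfdef]; rw [if_pos hA2]; ring
  have hv5 : f (some b) none = (y none - y (some b))^2 := by
    simp only [hfdef]; rw [if_pos hA3.symm]; ring
  have hv6 : f none (some b) = (y none - y (some b))^2 := if_pos hA3
  set p : ℝ := y (some a) - y none with hpdef
  set q : ℝ := y none - y (some b) with hqdef
  clear_value x y d p q f
  have hbound : (y (some a) - y (some b))^2 + p^2 + q^2 ≤ d := by
    rw [hquad]
    have : 2 * ((y (some a) - y (some b))^2 + p^2 + q^2) ≤ ∑ i, ∑ j, f i j := by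
      calc 2 * ((y (some a) - y (some b))^2 + p^2 + q^2)
          = (f (some a) (some b) + f (some a) none) +
            ((f (some b) (some a) + f (some b) none) +
             (f none (some a) + f none (some b))) := by
            rw [hv1, hv2, hv3, hv4, hv5, hv6]; ring
      _ ≤ (∑ j, f (some a) j) + ((∑ j, f (some b) j) + (∑ j, f none j)) := by
            gcongr
      _ ≤ ∑ i, ∑ j, f i j := houter
    linarith
  have hpq : p + q = y (some a) - y (some b) := by rw [hpdef, hqdef]; ring
  have hdlt : d < 1 := by
    have hbound' : (p + q)^2 + p^2 + q^2 ≤ d := by rw [hpq]; exact hbound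
    have hd2' : d = p + q := by rw [hd2, ← hpq]
    exact tri_bound hbound' hd2'
  rw [← hd1]
  exact ⟨hConn, hdlt, sub_ne_zero.mpr hdlt.ne'⟩
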